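/- Interlacing step for three-term recurrences with negative coefficient (core of Theorem 3): let γ be a real number with γ < 0, let Q, p, q, P be real polynomials with positive leading coefficients satisfying P = Q·p + γ·q, and let n ≥ 1. Assume: q has exactly n−1 real zeros and p has exactly n real zeros, all of these zeros are simple, the real zeros of q strictly interlace those of p (between any two consecutive real zeros of p there lies exactly one real zero of q), and P has exactly n+1 real zeros, all simple. Then the real zeros of p strictly interlace those of P: if t_1 < t_2 < ⋯ < t_{n+1} are the real zeros of P and x_1 < ⋯ < x_n are the real zeros of p, then t_1 < x_1 < t_2 < x_2 < ⋯ < x_n < t_{n+1}. -/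

import Mathlib

/-!
Interlacing step for three-term recurrences with negative coefficient
(core of Theorem 3).

Here `n = m + 1 ≥ 1`: the polynomial `q` has exactly `m` real zeros, `p` has
exactly `m + 1` real zeros and `P` has exactly `m + 2` real zeros, all simple; the
zeros are given by the strictly increasing enumerations `yr`, `xr`, `tr`
(the enumerations together with the "iff" root conditions express that these are
exactly the real zeros).
-/

open Polynomial

/-- A real polynomial with no roots on `[a, b]` has the same (nonzero) sign at `a` and `b`. -/
lemma aux_sign_const {f : Polynomial ℝ} {a b : ℝ} (hab : a ≤ b)
    (h : ∀ s ∈ Set.Icc a b, ¬ f.IsRoot s) : 0 < f.eval a * f.eval b := by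
  have ha : f.eval a ≠ 0 := h a ⟨le_refl a, hab⟩
  have hb : f.eval b ≠ 0 := h b ⟨hab, le_refl b⟩
  rcases lt_or_gt_of_ne ha with ha' | ha' <;> rcases lt_or_gt_of_ne hb with hb' | hb'
  · nlinarith
  · obtain ⟨s, hs, hfs⟩ := intermediate_value_Icc hab f.continuous.continuousOn
      (Set.mem_Icc.2 ⟨ha'.le, hb'.le⟩)
    exact absurd hfs (h s hs)
  · obtain ⟨s, hs, hfs⟩ := intermediate_value_Icc' hab f.continuous.continuousOn
      (Set.mem_Icc.2 ⟨hb'.le, ha'.le⟩)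
    exact absurd hfs (h s hs)
  · nlinarith

/-- IVT: a sign change on `(a, b)` produces a root. -/
lemma aux_exists_root_Ioo {f : Polynomial ℝ} {a b : ℝ} (hab : a < b)
    (h : f.eval a * f.eval b < 0) : ∃ s, (a < s ∧ s < b) ∧ f.IsRoot s := by
  rcases mul_neg_iff.1 h with ⟨ha, hb⟩ | ⟨ha, hb⟩
  · obtain ⟨s, hs, hfs⟩ := intermediate_value_Ioo' hab.le f.continuous.continuousOn
      (Set.mem_Ioo.2 ⟨hb, ha⟩)
    exact ⟨s, ⟨hs.1, hs.2⟩, hfs⟩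
  · obtain ⟨s, hs, hfs⟩ := intermediate_value_Ioo hab.le f.continuous.continuousOn
      (Set.mem_Ioo.2 ⟨ha, hb⟩)
    exact ⟨s, ⟨hs.1, hs.2⟩, hfs⟩

/-- Across a single simple root, a polynomial changes sign. -/
lemma aux_sign_flip {f : Polynomial ℝ} {a r b : ℝ} (har : a < r) (hrb : r < b)
    (hm : f.rootMultiplicity r = 1)
    (h : ∀ s ∈ Set.Icc a b, f.IsRoot s → s = r) : f.eval a * f.eval b < 0 := by
  have hf : f ≠ 0 := by
    intro h0
    rw [h0, rootMultiplicity_zero] at hm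
    exact one_ne_zero hm.symm
  obtain ⟨g, hg, hnd⟩ := f.exists_eq_pow_rootMultiplicity_mul_and_not_dvd hf r
  rw [hm, pow_one] at hg
  have hgr : ¬ g.IsRoot r := fun hr => hnd (dvd_iff_isRoot.2 hr)
  have hgroots : ∀ s ∈ Set.Icc a b, ¬ g.IsRoot s := by
    intro s hs hgs
    have hfs : f.IsRoot s := by
      rw [hg]
      simp [IsRoot, hgs.eq_zero]
    have := h s hs hfs
    subst this
    exact hgr hgs
  have hpos := aux_sign_const (har.trans hrb).le hgroots
  have ea : f.eval a = (a - r) * g.eval a := by rw [hg]; simp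
  have eb : f.eval b = (b - r) * g.eval b := by rw [hg]; simp
  rw [ea, eb]
  nlinarith [mul_neg_of_neg_of_pos (mul_neg_of_neg_of_pos (sub_neg.2 har) (sub_pos.2 hrb)) hpos]

/-- A polynomial with positive leading coefficient takes positive values at
arbitrarily large points. -/
lemma aux_exists_eval_pos {f : Polynomial ℝ} (hlc : 0 < f.leadingCoeff) (a : ℝ) :
    ∃ S, a < S ∧ 0 < f.eval S := by
  by_cases hdeg : 0 < f.degree
  · have ht := f.tendsto_atTop_of_leadingCoeff_nonneg hdeg hlc.le
    have := (ht.eventually_gt_atTop 0).and (Filter.eventually_gt_atTop a)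
    obtain ⟨S, hS1, hS2⟩ := this.exists
    exact ⟨S, hS2, hS1⟩
  · have h0 : f.natDegree = 0 := natDegree_eq_zero_iff_degree_le_zero.2 (not_lt.1 hdeg)
    have hC : f = C (f.coeff 0) := f.eq_C_of_natDegree_eq_zero h0
    have : f.leadingCoeff = f.coeff 0 := by rw [leadingCoeff, h0]
    refine ⟨a + 1, by linarith, ?_⟩
    rw [hC]
    simpa using this ▸ hlc

/-- If a polynomial with positive leading coefficient has no roots in `[a, ∞)`,
it is positive at `a`. -/
lemma aux_eval_pos_right {f : Polynomial ℝ} (hlc : 0 < f.leadingCoeff) {a : ℝ}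
    (h : ∀ s, a ≤ s → ¬ f.IsRoot s) : 0 < f.eval a := by
  obtain ⟨S, hS, hpos⟩ := aux_exists_eval_pos hlc a
  have := aux_sign_const hS.le (fun s hs => h s hs.1)
  nlinarith

/-- Sign at the far left: no roots in `(-∞, a]` forces the sign `(-1)^deg`. -/
lemma aux_eval_left_ray {f : Polynomial ℝ} (hlc : 0 < f.leadingCoeff) {a : ℝ}
    (h : ∀ s, s ≤ a → ¬ f.IsRoot s) :
    (Even f.natDegree → 0 < f.eval a) ∧ (¬ Even f.natDegree → f.eval a < 0) := by
  have hXdeg : (-X : Polynomial ℝ).natDegree ≠ 0 := by simp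
  have hlcX : (-X : Polynomial ℝ).leadingCoeff = -1 := by simp
  have hcomp : ∀ s : ℝ, (f.comp (-X)).eval s = f.eval (-s) := by
    intro s; rw [eval_comp]; simp
  have hlc_comp : (f.comp (-X)).leadingCoeff = f.leadingCoeff * (-1) ^ f.natDegree := by
    rw [leadingCoeff_comp hXdeg, hlcX]
  constructor
  · intro heven
    have hlcg : 0 < (f.comp (-X)).leadingCoeff := by
      rw [hlc_comp, heven.neg_one_pow]; simpa using hlc
    have hnr : ∀ s, -a ≤ s → ¬ (f.comp (-X)).IsRoot s := by
      intro s hs hroot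
      have : f.IsRoot (-s) := by rwa [IsRoot, ← hcomp]
      exact h (-s) (by linarith) this
    have := aux_eval_pos_right hlcg hnr
    rwa [hcomp, neg_neg] at this
  · intro hodd
    have hlcg : 0 < (-(f.comp (-X))).leadingCoeff := by
      rw [leadingCoeff_neg, hlc_comp, (Nat.not_even_iff_odd.1 hodd).neg_one_pow]
      simpa using hlc
    have hnr : ∀ s, -a ≤ s → ¬ (-(f.comp (-X))).IsRoot s := by
      intro s hs hroot
      have h1 : (f.comp (-X)).eval s = 0 := by
        have := hroot.eq_zero
        rw [eval_neg] at this
        linarith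
      have : f.IsRoot (-s) := by rwa [IsRoot, ← hcomp]
      exact h (-s) (by linarith) this
    have := aux_eval_pos_right hlcg hnr
    rw [eval_neg, hcomp, neg_neg] at this
    linarith

/-- A nonzero real polynomial with no real roots has even degree. -/
lemma aux_even_natDegree_of_no_root {g : Polynomial ℝ} (hg : g ≠ 0)
    (h : ∀ s : ℝ, ¬ g.IsRoot s) : Even g.natDegree := by
  by_contra hodd
  rcases lt_or_gt_of_ne (leadingCoeff_ne_zero.2 hg) with hlc | hlc
  · have hlc' : 0 < (-g).leadingCoeff := by rw [leadingCoeff_neg]; linarith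
    have hnr : ∀ s : ℝ, ¬ (-g).IsRoot s := by
      intro s hs
      have := hs.eq_zero
      rw [eval_neg] at this
      exact h s (by simpa [IsRoot] using (by linarith : g.eval s = 0))
    have h1 : 0 < (-g).eval 0 := aux_eval_pos_right hlc' (fun s _ => hnr s)
    have h2 : (-g).eval 0 < 0 :=
      (aux_eval_left_ray hlc' (a := 0) (fun s _ => hnr s)).2 (by simpa using hodd)
    linarith
  · have h1 : 0 < g.eval 0 := aux_eval_pos_right hlc (fun s _ => h s)
    have h2 : g.eval 0 < 0 := (aux_eval_left_ray hlc (a := 0) (fun s _ => h s)).2 hodd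
    linarith

/-- The degree of a nonzero real polynomial equals the number of its real roots
(with multiplicity) plus an even number. -/
lemma aux_natDegree_parity {f : Polynomial ℝ} (hf : f ≠ 0) :
    ∃ k, f.natDegree = Multiset.card f.roots + 2 * k := by
  obtain ⟨g, hg⟩ := f.prod_multiset_X_sub_C_dvd
  have hmonic : ((f.roots.map fun a => X - C a).prod).Monic :=
    monic_multiset_prod_of_monic _ _ (fun a _ => monic_X_sub_C a)
  have hgne : g ≠ 0 := by rintro rfl; rw [mul_zero] at hg; exact hf hg
  have hdeg : f.natDegree = Multiset.card f.roots + g.natDegree := by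
    conv_lhs => rw [hg]
    rw [natDegree_mul hmonic.ne_zero hgne, natDegree_multiset_prod_X_sub_C_eq_card]
  have hrootsg : g.roots = 0 := by
    have hne : ((f.roots.map fun a => X - C a).prod) * g ≠ 0 := hg ▸ hf
    have := roots_mul hne
    rw [← hg, roots_multiset_prod_X_sub_C] at this
    exact (left_eq_add.1 this)
  have hnr : ∀ s : ℝ, ¬ g.IsRoot s := by
    intro s hs
    have : s ∈ g.roots := (mem_roots hgne).2 hs
    rw [hrootsg] at this
    simp at this
  obtain ⟨k, hk⟩ := aux_even_natDegree_of_no_root hgne hnr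
  exact ⟨k, by omega⟩

theorem interlacing_step (γ : ℝ) (hγ : γ < 0) (Q p q P : Polynomial ℝ)
    (hQlead : 0 < Q.leadingCoeff) (hplead : 0 < p.leadingCoeff)
    (hqlead : 0 < q.leadingCoeff) (hPlead : 0 < P.leadingCoeff)
    (hrec : P = Q * p + Polynomial.C γ * q)
    (m : ℕ)
    (yr : Fin m → ℝ) (xr : Fin (m + 1) → ℝ) (tr : Fin (m + 2) → ℝ)
    (hy : StrictMono yr) (hx : StrictMono xr) (ht : StrictMono tr)
    (hyroot : ∀ s : ℝ, q.IsRoot s ↔ ∃ i, s = yr i)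
    (hxroot : ∀ s : ℝ, p.IsRoot s ↔ ∃ i, s = xr i)
    (htroot : ∀ s : ℝ, P.IsRoot s ↔ ∃ i, s = tr i)
    (hysimple : ∀ i, q.rootMultiplicity (yr i) = 1)
    (hxsimple : ∀ i, p.rootMultiplicity (xr i) = 1)
    (htsimple : ∀ i, P.rootMultiplicity (tr i) = 1)
    (hinter : ∀ i : Fin m, xr i.castSucc < yr i ∧ yr i < xr i.succ) :
    ∀ i : Fin (m + 1), tr i.castSucc < xr i ∧ xr i < tr i.succ := by
  classical
  have hP0 : P ≠ 0 := fun h => by simp [h] at hPlead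
  -- q does not vanish at the roots of p
  have hqx : ∀ i : Fin (m + 1), q.eval (xr i) ≠ 0 := by
    intro i hi
    obtain ⟨j, hj⟩ := (hyroot (xr i)).1 hi
    have h1 := hx.lt_iff_lt.1 (hj ▸ (hinter j).1)
    have h2 := hx.lt_iff_lt.1 (hj ▸ (hinter j).2)
    simp [Fin.lt_def] at h1 h2
    omega
  -- P at the roots of p
  have hPx : ∀ i : Fin (m + 1), P.eval (xr i) = γ * q.eval (xr i) := by
    intro i
    have hpx : p.eval (xr i) = 0 := (hxroot _).2 ⟨i, rfl⟩
    rw [hrec]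
    simp [hpx]
  -- q changes sign between consecutive roots of p
  have hqflip : ∀ k : Fin m, q.eval (xr k.castSucc) * q.eval (xr k.succ) < 0 := by
    intro k
    apply aux_sign_flip (hinter k).1 (hinter k).2 (hysimple k)
    intro s hs hroot
    obtain ⟨j, rfl⟩ := (hyroot s).1 hroot
    have h1 := hx.lt_iff_lt.1 (lt_of_lt_of_le (hinter j).1 hs.2)
    have h2 := hx.lt_iff_lt.1 (lt_of_le_of_lt hs.1 (hinter j).2)
    simp [Fin.lt_def] at h1 h2
    congr 1
    exact Fin.ext (by omega)
  -- q is positive at the largest root of p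
  have hqtop : 0 < q.eval (xr (Fin.last m)) := by
    apply aux_eval_pos_right hqlead
    intro s hs hroot
    obtain ⟨j, rfl⟩ := (hyroot s).1 hroot
    have : yr j < xr (Fin.last m) := lt_of_lt_of_le (hinter j).2 (hx.monotone (Fin.le_last _))
    linarith
  -- sign chain for q at the roots of p
  have hE : ∀ i : Fin (m + 1), 0 < (-1 : ℝ) ^ (i : ℕ) * (q.eval (xr i) * q.eval (xr 0)) := by
    intro i
    induction i using Fin.induction with
    | zero => simpa using mul_self_pos.2 (hqx 0)
    | succ k ih =>
      have hf := hqflip k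
      have hA := mul_self_pos.2 (hqx k.castSucc)
      simp only [Fin.coe_castSucc] at ih
      simp only [Fin.val_succ, pow_succ]
      nlinarith [mul_neg_of_pos_of_neg ih hf, hA]
  have hq0sign : 0 < (-1 : ℝ) ^ m * q.eval (xr 0) := by
    have h1 := hE (Fin.last m)
    simp only [Fin.val_last] at h1
    nlinarith [hqtop]
  -- the number of real roots of P (with multiplicity) is m + 2
  have hcard : Multiset.card P.roots = m + 2 := by
    have htf : P.roots.toFinset = Finset.image tr Finset.univ := by
      ext a
      simp only [Multiset.mem_toFinset, mem_roots hP0, Finset.mem_image, Finset.mem_univ,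
        true_and]
      rw [htroot a]
      exact ⟨fun ⟨i, hi⟩ => ⟨i, hi.symm⟩, fun ⟨i, hi⟩ => ⟨i, hi.symm⟩⟩
    have hsum := (Multiset.toFinset_sum_count_eq P.roots).symm
    rw [htf, Finset.sum_image (fun a _ b _ hab => ht.injective hab)] at hsum
    have : ∀ j : Fin (m + 2), P.roots.count (tr j) = 1 := by
      intro j
      rw [count_roots]
      exact htsimple j
    rw [hsum]
    simp [this]
  obtain ⟨kdeg, hkdeg⟩ := aux_natDegree_parity hP0
  rw [hcard] at hkdeg
  -- a root of P above the largest root of p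
  have hPxlast : P.eval (xr (Fin.last m)) < 0 := by
    rw [hPx]
    exact mul_neg_of_neg_of_pos hγ hqtop
  obtain ⟨S₂, hS₂, hS₂pos⟩ := aux_exists_eval_pos hPlead (xr (Fin.last m))
  obtain ⟨ztop, ⟨hztop1, _⟩, hztoproot⟩ :=
    aux_exists_root_Ioo hS₂ (mul_neg_of_neg_of_pos hPxlast hS₂pos)
  -- a root of P in each gap between consecutive roots of p
  have hgap : ∀ k : Fin m, ∃ s, (xr k.castSucc < s ∧ s < xr k.succ) ∧ P.IsRoot s := by
    intro k
    apply aux_exists_root_Ioo (hx (Fin.castSucc_lt_succ : k.castSucc < k.succ))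
    rw [hPx, hPx]
    have := hqflip k
    nlinarith [mul_pos_of_neg_of_neg hγ hγ]
  choose zg hzg1 hzg2 using hgap
  -- a root of P below the smallest root of p
  obtain ⟨w, hwlt, hwroot⟩ : ∃ w, w < xr 0 ∧ P.IsRoot w := by
    set a0 := min (xr 0) (tr 0) - 1 with ha0
    have hnr : ∀ s, s ≤ a0 → ¬ P.IsRoot s := by
      intro s hs hroot
      obtain ⟨j, rfl⟩ := (htroot s).1 hroot
      have h1 : tr 0 ≤ tr j := ht.monotone (Fin.zero_le j)
      have h2 : min (xr 0) (tr 0) ≤ tr 0 := min_le_right _ _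
      rw [ha0] at hs
      linarith
    have ha0x : a0 < xr 0 := by
      have := min_le_left (xr 0) (tr 0)
      rw [ha0]
      linarith
    have hray := aux_eval_left_ray hPlead hnr
    by_cases hm : Even m
    · have hevendeg : Even P.natDegree := by
        obtain ⟨t, rfl⟩ := hm
        exact ⟨t + 1 + kdeg, by omega⟩
      have hPa0 : 0 < P.eval a0 := hray.1 hevendeg
      have hqx0 : 0 < q.eval (xr 0) := by
        have h1 := hq0sign
        rw [hm.neg_one_pow] at h1
        linarith
      have hPx0 : P.eval (xr 0) < 0 := by
        rw [hPx]
        exact mul_neg_of_neg_of_pos hγ hqx0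
      obtain ⟨w, hw, hwroot⟩ := aux_exists_root_Ioo ha0x (mul_neg_of_pos_of_neg hPa0 hPx0)
      exact ⟨w, hw.2, hwroot⟩
    · have hodddeg : ¬ Even P.natDegree := by
        intro hc
        apply hm
        obtain ⟨t, ht'⟩ := hc
        exact ⟨t - 1 - kdeg, by omega⟩
      have hPa0 : P.eval a0 < 0 := hray.2 hodddeg
      have hqx0 : q.eval (xr 0) < 0 := by
        have h1 := hq0sign
        rw [(Nat.not_even_iff_odd.1 hm).neg_one_pow] at h1
        linarith
      have hPx0 : 0 < P.eval (xr 0) := by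
        rw [hPx]
        exact mul_pos_of_neg_of_neg hγ hqx0
      obtain ⟨w, hw, hwroot⟩ := aux_exists_root_Ioo ha0x (mul_neg_of_neg_of_pos hPa0 hPx0)
      exact ⟨w, hw.2, hwroot⟩
  -- assemble the strictly monotone enumeration of all roots of P
  set z : Fin (m + 1) → ℝ := Fin.lastCases ztop zg with hzdef
  have hz_cast : ∀ k : Fin m, z k.castSucc = zg k := fun k => Fin.lastCases_castSucc k
  have hz_last : z (Fin.last m) = ztop := Fin.lastCases_last
  have hz_lb : ∀ k : Fin (m + 1), xr k < z k := by
    intro k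
    induction k using Fin.lastCases with
    | last => rw [hz_last]; exact hztop1
    | cast k => rw [hz_cast]; exact (hzg1 k).1
  have hz_ub : ∀ k : Fin m, z k.castSucc < xr k.succ := by
    intro k; rw [hz_cast]; exact (hzg1 k).2
  have hz_root : ∀ k : Fin (m + 1), P.IsRoot (z k) := by
    intro k
    induction k using Fin.lastCases with
    | last => rw [hz_last]; exact hztoproot
    | cast k => rw [hz_cast]; exact hzg2 k
  set e : Fin (m + 2) → ℝ := Fin.cases w z with hedef
  have he0 : e 0 = w := rfl
  have hesucc : ∀ j : Fin (m + 1), e j.succ = z j := fun j => by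
    simp [hedef]
  have he_root : ∀ j : Fin (m + 2), P.IsRoot (e j) := by
    intro j
    rcases Fin.eq_zero_or_eq_succ j with rfl | ⟨j', rfl⟩
    · rw [he0]; exact hwroot
    · rw [hesucc]; exact hz_root j'
  have he_mono : StrictMono e := by
    rw [Fin.strictMono_iff_lt_succ]
    intro i
    rcases Fin.eq_zero_or_eq_succ i with rfl | ⟨j, rfl⟩
    · rw [Fin.castSucc_zero, he0, hesucc]
      calc w < xr 0 := hwlt
        _ < z 0 := hz_lb 0
    · rw [← Fin.succ_castSucc, hesucc, hesucc]
      calc z j.castSucc < xr j.succ := hz_ub j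
        _ < z j.succ := hz_lb j.succ
  -- both `tr` and `e` enumerate the root set of `P` in increasing order
  have hScard : (Finset.image tr Finset.univ).card = m + 2 := by
    rw [Finset.card_image_of_injective _ ht.injective, Finset.card_univ, Fintype.card_fin]
  have htr_eq : tr = (Finset.image tr Finset.univ).orderEmbOfFin hScard :=
    Finset.orderEmbOfFin_unique hScard
      (fun x => Finset.mem_image_of_mem tr (Finset.mem_univ x)) ht
  have he_eq : e = (Finset.image tr Finset.univ).orderEmbOfFin hScard :=
    Finset.orderEmbOfFin_unique hScard
      (fun x => by
        obtain ⟨j, hj⟩ := (htroot (e x)).1 (he_root x)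
        rw [hj]
        exact Finset.mem_image_of_mem tr (Finset.mem_univ j)) he_mono
  have hte : tr = e := htr_eq.trans he_eq.symm
  -- conclude
  intro i
  constructor
  · rcases Fin.eq_zero_or_eq_succ i with rfl | ⟨j, rfl⟩
    · rw [Fin.castSucc_zero, hte, he0]
      exact hwlt
    · rw [← Fin.succ_castSucc, hte, hesucc]
      exact lt_of_lt_of_le (hz_ub j) (le_refl _)
  · rw [hte, hesucc]
    exact hz_lb i
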